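/- For every real η ≥ 1 there exists a constant C_η > 0 such that for every positive integer n there is a positive integer m with m ∣ n, m ≤ n^{1/η}, and h(n) ≤ C_η · h(m)^{1+⌊η⌋}. -/

import Mathlib

open Finset

/-- `h(n) = Σ_{a ∣ n} d(a)²`, where `d` is the number-of-divisors function. -/
def hfun (n : ℕ) : ℕ := ∑ a ∈ n.divisors, (a.divisors.card) ^ 2

/-- `Ffun a = hfun (p^a)` for any prime `p`. -/
def Ffun (a : ℕ) : ℕ := ∑ i ∈ Finset.range (a+1), (i+1)^2

lemma Ffun_pos (a : ℕ) : 1 ≤ Ffun a := by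
  have h : (0+1)^2 ≤ Ffun a :=
    Finset.single_le_sum (f := fun i => (i+1)^2) (fun i _ => Nat.zero_le _)
      (Finset.mem_range.2 (Nat.succ_pos a))
  simpa using h

lemma Ffun_ge (a : ℕ) : (a+1)^2 ≤ Ffun a :=
  Finset.single_le_sum (f := fun i => (i+1)^2) (fun i _ => Nat.zero_le _)
    (Finset.mem_range.2 (Nat.lt_succ_self a))

lemma Ffun_le (a : ℕ) : Ffun a ≤ (a+1)^3 := by
  calc Ffun a ≤ ∑ _i ∈ Finset.range (a+1), (a+1)^2 := by
        apply Finset.sum_le_sum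
        intro i hi
        have : i + 1 ≤ a + 1 := Finset.mem_range.1 hi
        exact Nat.pow_le_pow_left this 2
    _ = (a+1) * (a+1)^2 := by simp [Finset.sum_const, mul_comm]
    _ = (a+1)^3 := by ring

lemma Ffun_mono {a b : ℕ} (h : a ≤ b) : Ffun a ≤ Ffun b :=
  Finset.sum_le_sum_of_subset (Finset.range_subset_range.2 (by omega))

lemma hfun_one : hfun 1 = 1 := by simp [hfun]

lemma hfun_mul {u v : ℕ} (h : Nat.Coprime u v) : hfun (u*v) = hfun u * hfun v := by
  classical
  set g : ArithmeticFunction ℕ :=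
    ArithmeticFunction.zeta * ((ArithmeticFunction.sigma 0).pmul (ArithmeticFunction.sigma 0))
    with hg
  have hgm : g.IsMultiplicative :=
    ArithmeticFunction.isMultiplicative_zeta.mul
      (ArithmeticFunction.isMultiplicative_sigma.pmul ArithmeticFunction.isMultiplicative_sigma)
  have hval : ∀ n, hfun n = g n := by
    intro n
    rw [hg, ArithmeticFunction.zeta_mul_apply]
    apply Finset.sum_congr rfl
    intro i _
    rw [ArithmeticFunction.pmul_apply, ArithmeticFunction.sigma_zero_apply, sq]
  rw [hval, hval, hval, hgm.map_mul_of_coprime h]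

lemma hfun_prime_pow {p : ℕ} (hp : p.Prime) (a : ℕ) : hfun (p^a) = Ffun a := by
  rw [hfun, Nat.divisors_prime_pow hp, Finset.sum_map]
  apply Finset.sum_congr rfl
  intro i _
  have : ((p^i).divisors.card) = i + 1 := by
    rw [← ArithmeticFunction.sigma_zero_apply, ArithmeticFunction.sigma_zero_apply_prime_pow hp]
  simp [this]

-- high exponent inequality
lemma Ffun_high {k a : ℕ} (hk : 2 ≤ k) (ha : 8*k^4 ≤ a) : Ffun a ≤ Ffun (a / k) ^ k := by
  set b := a / k with hb
  have hk0 : 0 < k := by omega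
  have hbk : 8*k^3 ≤ b := by
    rw [hb, Nat.le_div_iff_mul_le hk0]
    calc 8*k^3*k = 8*k^4 := by ring
      _ ≤ a := ha
  have h1 : a + 1 ≤ k * (b+1) := by
    rw [mul_add, mul_one, hb]
    have := Nat.div_add_mod a k
    have := Nat.mod_lt a hk0
    omega
  have hk3 : k^3 ≤ b + 1 := by nlinarith [pow_pos hk0 3]
  calc Ffun a ≤ (a+1)^3 := Ffun_le a
    _ ≤ (k*(b+1))^3 := Nat.pow_le_pow_left h1 3
    _ = k^3 * (b+1)^3 := by ring
    _ ≤ (b+1) * (b+1)^3 := Nat.mul_le_mul_right _ hk3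
    _ = ((b+1)^2)^2 := by ring
    _ ≤ (Ffun b)^2 := Nat.pow_le_pow_left (Ffun_ge b) 2
    _ ≤ (Ffun b)^k := Nat.pow_le_pow_right (Ffun_pos b) hk

-- coprimality of products of prime powers over disjoint prime sets
lemma cop_prodpow {s t : Finset ℕ} (hs : ∀ p ∈ s, p.Prime) (ht : ∀ q ∈ t, q.Prime)
    (hd : ∀ p ∈ s, p ∉ t) (e f : ℕ → ℕ) :
    Nat.Coprime (∏ p ∈ s, p ^ e p) (∏ q ∈ t, q ^ f q) := by
  apply Nat.Coprime.prod_left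
  intro p hp
  apply Nat.Coprime.prod_right
  intro q hq
  exact Nat.Coprime.pow _ _ ((Nat.coprime_primes (hs p hp) (ht q hq)).2
    (fun h => hd p hp (h ▸ hq)))

lemma lemA (k : ℕ) (hk : 1 ≤ k) :
    ∀ (j : ℕ) (S : Finset ℕ), (∀ x ∈ S, 1 ≤ x) → j * k ≤ S.card →
    ∃ T ⊆ S, j ≤ T.card ∧ (∏ x ∈ T, x) ^ k ≤ ∏ x ∈ S, x := by
  intro j
  induction j with
  | zero =>
    intro S hS _
    exact ⟨∅, Finset.empty_subset S, by simp,
      by simpa using Finset.one_le_prod' hS⟩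
  | succ j IH =>
    intro S hS hcard
    rw [add_mul, one_mul] at hcard
    have hSne : S.Nonempty := by
      rw [← Finset.card_pos]; omega
    set x := S.min' hSne with hx
    have hxS : x ∈ S := S.min'_mem hSne
    have hcard_erase : k - 1 ≤ (S.erase x).card := by
      rw [Finset.card_erase_of_mem hxS]; omega
    obtain ⟨E, hES, hEcard⟩ := Finset.exists_subset_card_eq hcard_erase
    set S' := (S.erase x) \ E with hS'
    have hS'card : j * k ≤ S'.card := by
      rw [hS', Finset.card_sdiff_of_subset hES, Finset.card_erase_of_mem hxS, hEcard]
      omega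
    have hS'sub : S' ⊆ S := (Finset.sdiff_subset).trans (Finset.erase_subset _ _)
    obtain ⟨T', hT'S', hT'card, hT'prod⟩ := IH S' (fun y hy => hS y (hS'sub hy)) hS'card
    have hxT' : x ∉ T' := fun h => (Finset.notMem_erase x S)
      (Finset.sdiff_subset (hT'S' h))
    refine ⟨insert x T', Finset.insert_subset hxS (hT'S'.trans hS'sub), ?_, ?_⟩
    · rw [Finset.card_insert_of_notMem hxT']; omega
    · rw [Finset.prod_insert hxT', mul_pow]
      have hsplit : (∏ y ∈ S', y) * ∏ y ∈ E, y = ∏ y ∈ S.erase x, y :=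
        Finset.prod_sdiff hES
      have hSprod : ∏ y ∈ S, y = x * ((∏ y ∈ S', y) * ∏ y ∈ E, y) := by
        rw [hsplit]
        exact (Finset.mul_prod_erase S (fun y => y) hxS).symm
      have hxE : x ^ (k-1) ≤ ∏ y ∈ E, y := by
        calc x ^ (k-1) = ∏ _y ∈ E, x := by rw [Finset.prod_const, hEcard]
          _ ≤ ∏ y ∈ E, y := Finset.prod_le_prod (fun _ _ => Nat.zero_le _)
              (fun y hy => S.min'_le y ((Finset.erase_subset _ _) (hES hy)))
      calc x ^ k * (∏ y ∈ T', y) ^ k ≤ x ^ k * ∏ y ∈ S', y :=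
            Nat.mul_le_mul_left _ hT'prod
        _ = x * x ^ (k-1) * ∏ y ∈ S', y := by
            rw [← pow_succ']
            congr 2
            omega
        _ ≤ x * (∏ y ∈ E, y) * ∏ y ∈ S', y := by
            have := Nat.mul_le_mul_left x hxE
            exact Nat.mul_le_mul_right _ this
        _ = ∏ y ∈ S, y := by rw [hSprod]; ring

lemma hfun_prodpow {t : Finset ℕ} (ht : ∀ p ∈ t, p.Prime) (e : ℕ → ℕ) :
    hfun (∏ p ∈ t, p ^ e p) = ∏ p ∈ t, Ffun (e p) := by
  classical
  induction t using Finset.induction_on with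
  | empty => simpa using hfun_one
  | insert p s hx hps =>
    rw [Finset.prod_insert hx, Finset.prod_insert hx]
    have hp : p.Prime := ht p (Finset.mem_insert_self p s)
    have hs : ∀ q ∈ s, q.Prime := fun q hq => ht q (Finset.mem_insert_of_mem hq)
    have hcop : Nat.Coprime (p ^ e p) (∏ q ∈ s, q ^ e q) := by
      have := cop_prodpow (s := {p}) (t := s) (by simpa using hp) hs
        (by simpa using hx) e e
      simpa using this
    rw [hfun_mul hcop, hps hs, hfun_prime_pow hp]

lemma fact_prodpow_apply {t : Finset ℕ} (ht : ∀ p ∈ t, p.Prime) (e : ℕ → ℕ) (q : ℕ) :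
    (∏ p ∈ t, p ^ e p).factorization q = if q ∈ t then e q else 0 := by
  classical
  rw [Nat.factorization_prod (fun p hp => pow_ne_zero _ (ht p hp).pos.ne')]
  have : ∀ p ∈ t, (p ^ e p).factorization = Finsupp.single p (e p) :=
    fun p hp => (ht p hp).factorization_pow
  rw [Finset.sum_congr rfl this]
  rw [Finsupp.finset_sum_apply]
  simp_rw [Finsupp.single_apply]
  exact Finset.sum_ite_eq' t q e

lemma primeFactors_prodpow {t : Finset ℕ} (ht : ∀ p ∈ t, p.Prime) (e : ℕ → ℕ)
    (he : ∀ p ∈ t, 0 < e p) : (∏ p ∈ t, p ^ e p).primeFactors = t := by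
  classical
  ext q
  rw [← Nat.support_factorization, Finsupp.mem_support_iff, fact_prodpow_apply ht e q]
  constructor
  · intro h
    by_contra hq
    simp [hq] at h
  · intro hq
    simp only [hq, if_true]
    exact (he q hq).ne'

set_option maxHeartbeats 1000000 in
lemma mainlem (k : ℕ) (hk : 2 ≤ k) :
    ∀ n : ℕ, 0 < n → ∃ m : ℕ, 0 < m ∧ m ∣ n ∧ m ^ k ≤ n ∧
      hfun n ≤ Ffun (8*k^4) ^ ((k-1) *
        ((n.primeFactors.image n.factorization).filter (· < 8*k^4)).card) * hfun m ^ k := by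
  intro n
  induction n using Nat.strong_induction_on with
  | _ n IH =>
  intro hn
  classical
  set K := 8*k^4 with hK
  set G := Ffun K with hG
  by_cases hn1 : n = 1
  · subst hn1
    refine ⟨1, one_pos, dvd_refl 1, by simp, ?_⟩
    have h1 : 1 ≤ G ^ ((k-1) * (((1:ℕ).primeFactors.image (Nat.factorization 1)).filter (· < K)).card) :=
      Nat.one_le_pow _ _ (Ffun_pos K)
    simpa [hfun_one] using h1
  -- setup
  set P := n.primeFactors with hP
  set ν := n.factorization with hν
  have hprimeP : ∀ p ∈ P, p.Prime := fun p hp => Nat.prime_of_mem_primeFactors hp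
  have hposP : ∀ p ∈ P, 0 < ν p := by
    intro p hp
    have : ν p ≠ 0 := by
      rw [hν, ← Finsupp.mem_support_iff, Nat.support_factorization]
      exact hp
    omega
  have hPne : P.Nonempty := Nat.nonempty_primeFactors.2 (by omega)
  obtain ⟨p0, hp0⟩ := hPne
  set a := ν p0 with ha
  have ha1 : 0 < a := hposP p0 hp0
  set S := P.filter (fun p => ν p = a) with hS
  set t' := P.filter (fun p => ¬ ν p = a) with ht'
  have hprimeS : ∀ p ∈ S, p.Prime := fun p hp => hprimeP p (Finset.filter_subset _ _ hp)
  have hprimet' : ∀ p ∈ t', p.Prime := fun p hp => hprimeP p (Finset.filter_subset _ _ hp)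
  set B := ∏ p ∈ S, p ^ ν p with hB
  set n₂ := ∏ p ∈ t', p ^ ν p with hn₂
  have hsplitn : B * n₂ = n := by
    rw [hB, hn₂, hS, ht', Finset.prod_filter_mul_prod_filter_not]
    exact Nat.factorization_prod_pow_eq_self (by omega)
  set Y := ∏ p ∈ S, p with hY
  have hBY : B = Y ^ a := by
    rw [hB, hY, ← Finset.prod_pow]
    exact Finset.prod_congr rfl (fun p hp => by rw [(Finset.mem_filter.1 hp).2])
  have hp0S : p0 ∈ S := Finset.mem_filter.2 ⟨hp0, rfl⟩
  have hY2 : 2 ≤ Y := le_trans (hprimeS p0 hp0S).two_le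
    (Finset.single_le_prod' (fun p hp => (hprimeS p hp).one_lt.le) hp0S)
  have hB2 : 2 ≤ B := by
    rw [hBY]
    exact le_trans hY2 (Nat.le_self_pow ha1.ne' Y)
  have hn₂pos : 0 < n₂ :=
    Finset.prod_pos (fun p hp => pow_pos (hprimet' p hp).pos _)
  have hn₂lt : n₂ < n := by
    calc n₂ = 1 * n₂ := (one_mul _).symm
      _ < B * n₂ := by
          apply Nat.mul_lt_mul_of_lt_of_le (by omega) (le_refl n₂) hn₂pos
      _ = n := hsplitn
  have hcop : Nat.Coprime B n₂ := by
    rw [hB, hn₂]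
    apply cop_prodpow hprimeS hprimet'
    intro p hp hpt
    exact (Finset.mem_filter.1 hpt).2 (Finset.mem_filter.1 hp).2
  obtain ⟨m₂, hm₂pos, hm₂dvd, hm₂k, hm₂h⟩ := IH n₂ hn₂lt hn₂pos
  set D₂ := ((n₂.primeFactors.image n₂.factorization).filter (· < K)).card with hD₂
  set Dn := ((P.image ν).filter (· < K)).card with hDn
  -- prime factor structure of n₂
  have hpf₂ : n₂.primeFactors = t' :=
    primeFactors_prodpow hprimet' ν (fun p hp => hposP p (Finset.filter_subset _ _ hp))
  have hfact₂ : ∀ q ∈ t', n₂.factorization q = ν q := by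
    intro q hq
    rw [hn₂, fact_prodpow_apply hprimet' ν q, if_pos hq]
  have hSE₂ : ∀ b ∈ (n₂.primeFactors.image n₂.factorization).filter (· < K),
      b ∈ (P.image ν).filter (· < K) ∧ b ≠ a := by
    intro b hb
    obtain ⟨hbim, hbK⟩ := Finset.mem_filter.1 hb
    obtain ⟨q, hq, hqb⟩ := Finset.mem_image.1 hbim
    rw [hpf₂] at hq
    have hqval : n₂.factorization q = ν q := hfact₂ q hq
    have hqP : q ∈ P := Finset.filter_subset _ _ hq
    constructor
    · exact Finset.mem_filter.2 ⟨Finset.mem_image.2 ⟨q, hqP, by rw [← hqval, hqb]⟩, hbK⟩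
    · intro hba
      exact (Finset.mem_filter.1 hq).2 (by rw [← hqval, hqb, hba])
  have hD₂Dn : D₂ ≤ Dn := by
    apply Finset.card_le_card
    intro b hb
    exact (hSE₂ b hb).1
  -- h values
  have hfunB : hfun B = Ffun a ^ S.card := by
    rw [hB, hfun_prodpow hprimeS ν]
    rw [Finset.prod_congr rfl (fun p hp => by rw [(Finset.mem_filter.1 hp).2] : 
      ∀ p ∈ S, Ffun (ν p) = Ffun a)]
    exact Finset.prod_const _
  have hfunn : hfun n = Ffun a ^ S.card * hfun n₂ := by
    rw [← hsplitn, hfun_mul hcop, hfunB]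
  have hGpos : 1 ≤ G := Ffun_pos K
  by_cases hcase : a < K
  -- small exponent case
  · obtain ⟨T, hTS, hTcard, hTprod⟩ := lemA k (by omega) (S.card / k) S
      (fun p hp => (hprimeS p hp).one_lt.le) (Nat.div_mul_le_self _ _)
    set X := ∏ p ∈ T, p with hX
    have hXa_dvd_B : X ^ a ∣ B := by
      rw [hBY]
      exact pow_dvd_pow_of_dvd (Finset.prod_dvd_prod_of_subset _ _ _ hTS) a
    have hXak : (X ^ a) ^ k ≤ B := by
      rw [hBY, ← pow_mul, mul_comm a k, pow_mul]
      exact Nat.pow_le_pow_left hTprod a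
    refine ⟨X ^ a * m₂, ?_, ?_, ?_, ?_⟩
    · exact Nat.mul_pos (pow_pos (Finset.prod_pos (fun p hp => (hprimeS p (hTS hp)).pos)) a) hm₂pos
    · rw [← hsplitn]; exact mul_dvd_mul hXa_dvd_B hm₂dvd
    · rw [← hsplitn, mul_pow]
      exact Nat.mul_le_mul hXak hm₂k
    -- the h inequality
    · have hcop2 : Nat.Coprime (X ^ a) m₂ :=
        Nat.Coprime.coprime_dvd_left hXa_dvd_B (Nat.Coprime.coprime_dvd_right hm₂dvd hcop)
      have hfunXa : hfun (X ^ a) = Ffun a ^ T.card := by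
        rw [hX, ← Finset.prod_pow, hfun_prodpow (fun p hp => hprimeS p (hTS hp)) (fun _ => a)]
        exact Finset.prod_const _
      have hfunm : hfun (X ^ a * m₂) = Ffun a ^ T.card * hfun m₂ := by
        rw [hfun_mul hcop2, hfunXa]
      have hSk : S.card ≤ (k-1) + T.card * k := by
        have h1 := Nat.div_add_mod S.card k
        have h2 : S.card % k < k := Nat.mod_lt _ (by omega)
        have h3 : k * (S.card / k) ≤ T.card * k := by
          rw [mul_comm k (S.card / k)]
          exact Nat.mul_le_mul_right k hTcard
        obtain ⟨x, hx⟩ : ∃ x, k * (S.card / k) = x := ⟨_, rfl⟩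
        obtain ⟨r, hr⟩ : ∃ r, S.card % k = r := ⟨_, rfl⟩
        obtain ⟨y, hy⟩ : ∃ y, T.card * k = y := ⟨_, rfl⟩
        rw [hx, hr] at h1
        rw [hx, hy] at h3
        rw [hr] at h2
        rw [hy]
        omega
      have haSE : a ∈ (P.image ν).filter (· < K) :=
        Finset.mem_filter.2 ⟨Finset.mem_image.2 ⟨p0, hp0, rfl⟩, hcase⟩
      have hDD : D₂ + 1 ≤ Dn := by
        rw [hD₂, hDn]
        have hins : insert a ((n₂.primeFactors.image n₂.factorization).filter (· < K))
            ⊆ (P.image ν).filter (· < K) := by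
          intro b hb
          rcases Finset.mem_insert.1 hb with hb | hb
          · rw [hb]; exact haSE
          · exact (hSE₂ b hb).1
        have hanot : a ∉ (n₂.primeFactors.image n₂.factorization).filter (· < K) := by
          intro hmem
          exact (hSE₂ a hmem).2 rfl
        calc D₂ + 1 = (insert a ((n₂.primeFactors.image n₂.factorization).filter (· < K))).card := 
              (Finset.card_insert_of_notMem hanot).symm
          _ ≤ ((P.image ν).filter (· < K)).card := Finset.card_le_card hins
      rw [hfunm, hfunn]
      calc Ffun a ^ S.card * hfun n₂ 
          ≤ Ffun a ^ S.card * (G ^ ((k-1) * D₂) * hfun m₂ ^ k) := Nat.mul_le_mul_left _ hm₂h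
        _ ≤ Ffun a ^ ((k-1) + T.card * k) * (G ^ ((k-1) * D₂) * hfun m₂ ^ k) := by
            apply Nat.mul_le_mul_right
            exact Nat.pow_le_pow_right (Ffun_pos a) hSk
        _ = (Ffun a ^ (k-1) * G ^ ((k-1) * D₂)) * ((Ffun a ^ T.card) ^ k * hfun m₂ ^ k) := by
            rw [pow_add, pow_mul]; ring
        _ ≤ (G ^ (k-1) * G ^ ((k-1) * D₂)) * ((Ffun a ^ T.card) ^ k * hfun m₂ ^ k) := by
            apply Nat.mul_le_mul_right
            apply Nat.mul_le_mul_right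
            exact Nat.pow_le_pow_left (Ffun_mono (by omega)) _
        _ = G ^ ((k-1) * (D₂ + 1)) * ((Ffun a ^ T.card) ^ k * hfun m₂ ^ k) := by
            rw [← pow_add]
            congr 1
            ring
        _ ≤ G ^ ((k-1) * Dn) * ((Ffun a ^ T.card) ^ k * hfun m₂ ^ k) := by
            apply Nat.mul_le_mul_right
            exact Nat.pow_le_pow_right hGpos (Nat.mul_le_mul_left _ hDD)
        _ = G ^ ((k-1) * Dn) * (Ffun a ^ T.card * hfun m₂) ^ k := by rw [mul_pow]
  -- high exponent case
  · have hKa : K ≤ a := by omega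
    set c := a / k with hc
    have hYc_dvd_B : Y ^ c ∣ B := by
      rw [hBY]
      exact pow_dvd_pow Y (Nat.div_le_self a k)
    have hYck : (Y ^ c) ^ k ≤ B := by
      rw [hBY, ← pow_mul]
      exact Nat.pow_le_pow_right (by omega) (Nat.div_mul_le_self a k)
    refine ⟨Y ^ c * m₂, ?_, ?_, ?_, ?_⟩
    · exact Nat.mul_pos (pow_pos (by omega) c) hm₂pos
    · rw [← hsplitn]; exact mul_dvd_mul hYc_dvd_B hm₂dvd
    · rw [← hsplitn, mul_pow]
      exact Nat.mul_le_mul hYck hm₂k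
    · have hcop2 : Nat.Coprime (Y ^ c) m₂ :=
        Nat.Coprime.coprime_dvd_left hYc_dvd_B (Nat.Coprime.coprime_dvd_right hm₂dvd hcop)
      have hfunYc : hfun (Y ^ c) = Ffun c ^ S.card := by
        rw [hY, ← Finset.prod_pow, hfun_prodpow hprimeS (fun _ => c)]
        exact Finset.prod_const _
      have hfunm : hfun (Y ^ c * m₂) = Ffun c ^ S.card * hfun m₂ := by
        rw [hfun_mul hcop2, hfunYc]
      have hhigh : Ffun a ≤ Ffun c ^ k := Ffun_high hk (by omega)
      rw [hfunm, hfunn]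
      calc Ffun a ^ S.card * hfun n₂ 
          ≤ Ffun a ^ S.card * (G ^ ((k-1) * D₂) * hfun m₂ ^ k) := Nat.mul_le_mul_left _ hm₂h
        _ ≤ (Ffun c ^ k) ^ S.card * (G ^ ((k-1) * Dn) * hfun m₂ ^ k) := by
            apply Nat.mul_le_mul
            · exact Nat.pow_le_pow_left hhigh _
            · apply Nat.mul_le_mul_right
              exact Nat.pow_le_pow_right hGpos (Nat.mul_le_mul_left _ hD₂Dn)
        _ = G ^ ((k-1) * Dn) * (Ffun c ^ S.card * hfun m₂) ^ k := by
            rw [mul_pow, ← pow_mul, mul_comm k S.card, pow_mul]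
            ring

set_option maxHeartbeats 2000000 in
/-- for every `η ≥ 1` and every `n` there is a small divisor `m ≤ n^{1/η}`
with `h(n) ≪_η h(m)^{1+⌊η⌋}`. -/
theorem stmt11 (η : ℝ) (hη : 1 ≤ η) :
    ∃ C : ℝ, 0 < C ∧ ∀ n : ℕ, 0 < n → ∃ m : ℕ, 0 < m ∧ m ∣ n ∧
      (m : ℝ) ≤ (n : ℝ) ^ (1 / η) ∧
      (hfun n : ℝ) ≤ C * (hfun m : ℝ) ^ (1 + ⌊η⌋₊) := by
  set k := ⌊η⌋₊ + 1 with hkdef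
  have hfl : 1 ≤ ⌊η⌋₊ := Nat.le_floor (by exact_mod_cast hη)
  have hk : 2 ≤ k := by omega
  set K := 8*k^4 with hK
  set CN : ℕ := Ffun K ^ ((k-1) * K) with hCN
  have hCNpos : 0 < CN := Nat.one_le_pow _ _ (Ffun_pos K)
  refine ⟨(CN : ℝ), by exact_mod_cast hCNpos, ?_⟩
  intro n hn
  obtain ⟨m, hmpos, hmdvd, hmk, hmh⟩ := mainlem k hk n hn
  have hDK : ((n.primeFactors.image n.factorization).filter (· < K)).card ≤ K := by
    calc ((n.primeFactors.image n.factorization).filter (· < K)).card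
        ≤ (Finset.range K).card := Finset.card_le_card (by
          intro b hb
          exact Finset.mem_range.2 (Finset.mem_filter.1 hb).2)
      _ = K := Finset.card_range K
  have hmhN : hfun n ≤ CN * hfun m ^ k := by
    refine le_trans hmh ?_
    apply Nat.mul_le_mul_right
    exact Nat.pow_le_pow_right (Ffun_pos K) (Nat.mul_le_mul_left _ hDK)
  refine ⟨m, hmpos, hmdvd, ?_, ?_⟩
  · -- size bound
    have hηpos : (0:ℝ) < η := by linarith
    have hkR : (0:ℝ) < (k:ℝ) := by positivity
    have hηk : η ≤ (k:ℝ) := by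
      have := Nat.lt_floor_add_one η
      push_cast
      push_cast at this
      linarith [show (k:ℝ) = (⌊η⌋₊:ℝ) + 1 by rw [hkdef]; norm_num]
    have h1 : ((m:ℝ))^(k:ℕ) ≤ (n:ℝ) := by exact_mod_cast hmk
    have hm0 : (0:ℝ) ≤ (m:ℝ) := Nat.cast_nonneg m
    have hn1 : (1:ℝ) ≤ (n:ℝ) := by exact_mod_cast hn
    have heq : (m:ℝ) = ((m:ℝ)^(k:ℕ)) ^ (1/(k:ℝ)) := by
      rw [← Real.rpow_natCast (m:ℝ) k, ← Real.rpow_mul hm0]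
      rw [mul_one_div, div_self (ne_of_gt hkR), Real.rpow_one]
    calc (m:ℝ) = ((m:ℝ)^(k:ℕ)) ^ (1/(k:ℝ)) := heq
      _ ≤ (n:ℝ) ^ (1/(k:ℝ)) := Real.rpow_le_rpow (by positivity) h1 (by positivity)
      _ ≤ (n:ℝ) ^ (1/η) := Real.rpow_le_rpow_of_exponent_le hn1
          (one_div_le_one_div_of_le hηpos hηk)
  · have : 1 + ⌊η⌋₊ = k := by omega
    rw [this]
    exact_mod_cast hmhN
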